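/- Let G be a topologically closed oligomorphic permutation group on a countably infinite set Ω acting without algebraicity, let U ⊆ Ω^n be G-invariant, let ∼ be a G-invariant equivalence relation on U, let B := U/∼ be dense, and assume the induced action of G on B is without algebraicity. Then every c ∈ B is strongly entangled by some a ∈ Ω. -/

import Mathlib

/-- The topology of pointwise convergence on functions `α → β`
(product topology with `β` discrete). -/
def FnTop (α β : Type*) : TopologicalSpace (α → β) :=
  @Pi.topologicalSpace α (fun _ => β) (fun _ => ⊥)

/-- The coordinatewise action of a permutation on tuples. -/
def tAct {Ω : Type*} (g : Equiv.Perm Ω) {n : ℕ} (u : Fin n → Ω) : Fin n → Ω :=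
  fun i => g (u i)

/-- The action of a permutation on sets of tuples. -/
def sAct {Ω : Type*} (g : Equiv.Perm Ω) {n : ℕ} (c : Set (Fin n → Ω)) : Set (Fin n → Ω) :=
  tAct g '' c

/-- A set of permutations is oligomorphic if for every `n` its coordinatewise
action on `n`-tuples has finitely many orbits. -/
def Oligo {Ω : Type*} (G : Set (Equiv.Perm Ω)) : Prop :=
  ∀ n : ℕ, Set.Finite {o : Set (Fin n → Ω) | ∃ t : Fin n → Ω, o = {s | ∃ g ∈ G, s = tAct g t}}

/-- `G` acts without algebraicity on `Ω`: if the orbit of `a` under the pointwise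
stabiliser of a finite tuple `y` is finite, then `a` is an entry of `y`. -/
def NoAlg {Ω : Type*} (G : Set (Equiv.Perm Ω)) : Prop :=
  ∀ (m : ℕ) (y : Fin m → Ω) (a : Ω),
    Set.Finite {b : Ω | ∃ g ∈ G, (∀ i, g (y i) = y i) ∧ b = g a} → ∃ i, a = y i

/-- `G` is topologically closed in the space of permutations with the topology of
pointwise convergence. -/
def TopClosedPerm {Ω : Type*} (G : Set (Equiv.Perm Ω)) : Prop :=
  @IsClosed (Ω → Ω) (FnTop Ω Ω) {f | ∃ g ∈ G, f = ⇑g}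

/-- The `r`-equivalence class of a tuple `u ∈ U`. -/
def cls {Ω : Type*} {n : ℕ} (U : Set (Fin n → Ω))
    (r : (Fin n → Ω) → (Fin n → Ω) → Prop) (u : Fin n → Ω) : Set (Fin n → Ω) :=
  {v ∈ U | r u v}

/-- The quotient `B = U/∼`, realised as the set of equivalence classes. -/
def classes {Ω : Type*} {n : ℕ} (U : Set (Fin n → Ω))
    (r : (Fin n → Ω) → (Fin n → Ω) → Prop) : Set (Set (Fin n → Ω)) :=
  {c | ∃ u ∈ U, c = cls U r u}

/-- `a` entangles the class `c` if `a` is an entry of every tuple in `c`. -/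
def Entangles {Ω : Type*} {n : ℕ} (a : Ω) (c : Set (Fin n → Ω)) : Prop :=
  ∀ v ∈ c, ∃ i, v i = a

/-- `a` strongly entangles `c ∈ B` if it entangles `c` and no other element of `B`. -/
def StronglyEntangles {Ω : Type*} {n : ℕ} (B : Set (Set (Fin n → Ω))) (a : Ω)
    (c : Set (Fin n → Ω)) : Prop :=
  Entangles a c ∧ ∀ c' ∈ B, Entangles a c' → c' = c

/-- `a` is algebraic over `c`: the orbit of `a` under the stabiliser `G_c` is finite. -/
def AlgebraicOver {Ω : Type*} {n : ℕ} (G : Set (Equiv.Perm Ω)) (a : Ω)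
    (c : Set (Fin n → Ω)) : Prop :=
  Set.Finite {b : Ω | ∃ g ∈ G, sAct g c = c ∧ b = g a}

/-- `B` is dense: for every `a ∈ Ω` there are `c₁,…,c_k ∈ B` whose joint stabiliser
is contained in the stabiliser of `a`. -/
def DenseClasses {Ω : Type*} {n : ℕ} (G : Set (Equiv.Perm Ω))
    (B : Set (Set (Fin n → Ω))) : Prop :=
  ∀ a : Ω, ∃ (k : ℕ) (cc : Fin k → Set (Fin n → Ω)),
    (∀ i, cc i ∈ B) ∧ ∀ g ∈ G, (∀ i, sAct g (cc i) = cc i) → g a = a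

/-- The induced action of `G` on `B` is without algebraicity. -/
def NoAlgOn {Ω : Type*} {n : ℕ} (G : Set (Equiv.Perm Ω))
    (B : Set (Set (Fin n → Ω))) : Prop :=
  ∀ (m : ℕ) (cc : Fin m → Set (Fin n → Ω)) (c : Set (Fin n → Ω)),
    (∀ i, cc i ∈ B) → c ∈ B →
    Set.Finite {c' | ∃ g ∈ G, (∀ i, sAct g (cc i) = cc i) ∧ c' = sAct g c} →
    ∃ i, c = cc i

/-- A finite list of classes `L` pins the point `x` if all members of `L` are classes
and every element of `G` fixing every member of `L` fixes `x`. -/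
def Pins {Ω : Type*} {n : ℕ} (GS : Set (Equiv.Perm Ω)) (U : Set (Fin n → Ω))
    (r : (Fin n → Ω) → (Fin n → Ω) → Prop) (L : List (Set (Fin n → Ω))) (x : Ω) : Prop :=
  (∀ f ∈ L, f ∈ classes U r) ∧ ∀ g ∈ GS, (∀ f ∈ L, sAct g f = f) → g x = x

theorem every_class_strongly_entangled
    {Ω : Type} [Countable Ω] [Infinite Ω]
    (G : Subgroup (Equiv.Perm Ω))
    (hGclosed : TopClosedPerm (G : Set (Equiv.Perm Ω)))
    (hGoligo : Oligo (G : Set (Equiv.Perm Ω)))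
    (hGnoalg : NoAlg (G : Set (Equiv.Perm Ω)))
    {n : ℕ} (U : Set (Fin n → Ω))
    (hUinv : ∀ g ∈ G, ∀ u ∈ U, tAct g u ∈ U)
    (r : (Fin n → Ω) → (Fin n → Ω) → Prop)
    (hrefl : ∀ u ∈ U, r u u)
    (hsymm : ∀ u ∈ U, ∀ v ∈ U, r u v → r v u)
    (htrans : ∀ u ∈ U, ∀ v ∈ U, ∀ w ∈ U, r u v → r v w → r u w)
    (hrinv : ∀ g ∈ G, ∀ u ∈ U, ∀ v ∈ U, r u v → r (tAct g u) (tAct g v))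
    (hdense : DenseClasses (G : Set (Equiv.Perm Ω)) (classes U r))
    (hBnoalg : NoAlgOn (G : Set (Equiv.Perm Ω)) (classes U r)) :
    ∀ c ∈ classes U r, ∃ a : Ω, StronglyEntangles (classes U r) a c := by
  classical
  -- abbreviation for the coerced group set
  set GS : Set (Equiv.Perm Ω) := (G : Set (Equiv.Perm Ω)) with hGS
  -- basic action lemmas
  have tact_comp : ∀ (g h : Equiv.Perm Ω) (v : Fin n → Ω), tAct g (tAct h v) = tAct (g * h) v := by
    intro g h v; funext i; simp [tAct, Equiv.Perm.mul_apply]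
  have tact_one : ∀ (v : Fin n → Ω), tAct (1 : Equiv.Perm Ω) v = v := by
    intro v; funext i; simp [tAct]
  have sact_comp : ∀ (g h : Equiv.Perm Ω) (d : Set (Fin n → Ω)),
      sAct g (sAct h d) = sAct (g * h) d := by
    intro g h d
    show tAct g '' (tAct h '' d) = tAct (g * h) '' d
    rw [Set.image_image]
    apply Set.image_congr
    intro v _
    exact tact_comp g h v
  have sact_one : ∀ (d : Set (Fin n → Ω)), sAct (1 : Equiv.Perm Ω) d = d := by
    intro d
    show tAct (1 : Equiv.Perm Ω) '' d = d
    have h1 : tAct (1 : Equiv.Perm Ω) = (id : (Fin n → Ω) → (Fin n → Ω)) := funext tact_one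
    rw [h1, Set.image_id]
  have sact_cancel : ∀ (h : Equiv.Perm Ω) (d : Set (Fin n → Ω)), sAct h (sAct h⁻¹ d) = d := by
    intro h d; rw [sact_comp, mul_inv_cancel, sact_one]
  have tact_cancel' : ∀ (h : Equiv.Perm Ω) (v : Fin n → Ω), tAct h⁻¹ (tAct h v) = v := by
    intro h v; rw [tact_comp, inv_mul_cancel, tact_one]
  have tact_cancel : ∀ (h : Equiv.Perm Ω) (v : Fin n → Ω), tAct h (tAct h⁻¹ v) = v := by
    intro h v; rw [tact_comp, mul_inv_cancel, tact_one]
  -- class basics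
  have mem_cls_self : ∀ v, v ∈ U → v ∈ cls U r v := fun v hv => ⟨hv, hrefl v hv⟩
  have cls_eq : ∀ u', u' ∈ U → ∀ v, v ∈ cls U r u' → cls U r v = cls U r u' := by
    intro u' hu' v hv
    obtain ⟨hvU, huv⟩ := hv
    ext w
    constructor
    · rintro ⟨hwU, hvw⟩
      exact ⟨hwU, htrans u' hu' v hvU w hwU huv hvw⟩
    · rintro ⟨hwU, huw⟩
      exact ⟨hwU, htrans v hvU u' hu' w hwU (hsymm u' hu' v hvU huv) huw⟩
  have sact_cls : ∀ g ∈ GS, ∀ v, v ∈ U → sAct g (cls U r v) = cls U r (tAct g v) := by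
    intro g hg v hv
    have hg' : g ∈ G := hg
    ext w
    constructor
    · rintro ⟨w', ⟨hw'U, hvw'⟩, rfl⟩
      exact ⟨hUinv g hg' w' hw'U, hrinv g hg' v hv w' hw'U hvw'⟩
    · rintro ⟨hwU, hgvw⟩
      refine ⟨tAct g⁻¹ w, ⟨hUinv g⁻¹ (inv_mem hg') w hwU, ?_⟩, tact_cancel g w⟩
      have h2 := hrinv g⁻¹ (inv_mem hg') (tAct g v) (hUinv g hg' v hv) w hwU hgvw
      rwa [tact_cancel'] at h2
  have sact_memB : ∀ g ∈ GS, ∀ d, d ∈ classes U r → sAct g d ∈ classes U r := by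
    rintro g hg d ⟨v, hvU, rfl⟩
    have hg' : g ∈ G := hg
    exact ⟨tAct g v, hUinv g hg' v hvU, sact_cls g hg v hvU⟩
  have sact_fix : ∀ g ∈ GS, ∀ d, d ∈ classes U r → ∀ v, v ∈ d → tAct g v = v → sAct g d = d := by
    rintro g hg d ⟨u', hu'U, rfl⟩ v hv hfix
    have hvU : v ∈ U := hv.1
    have h1 : cls U r v = cls U r u' := cls_eq u' hu'U v hv
    rw [← h1, sact_cls g hg v hvU, hfix]
  -- local data for the class c
  intro c hc
  obtain ⟨u, huU, hceq⟩ := hc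
  have hcB : c ∈ classes U r := ⟨u, huU, hceq⟩
  have huc : u ∈ c := by rw [hceq]; exact mem_cls_self u huU
  -- density in list form
  have dens' : ∀ x : Ω, ∃ L, Pins GS U r L x := by
    intro x
    obtain ⟨k, cc, hcc, hpin⟩ := hdense x
    refine ⟨List.ofFn cc, ?_, ?_⟩
    · intro f hf
      obtain ⟨i, rfl⟩ := List.mem_ofFn.mp hf
      exact hcc i
    · intro g hg hfix
      exact hpin g hg fun i => hfix (cc i) (List.mem_ofFn.mpr ⟨i, rfl⟩)
  -- NoAlgOn in list form
  have noAlgOn' : ∀ (L : List (Set (Fin n → Ω))), (∀ f ∈ L, f ∈ classes U r) →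
      ∀ d, d ∈ classes U r →
      Set.Finite {d' | ∃ g ∈ GS, (∀ f ∈ L, sAct g f = f) ∧ d' = sAct g d} →
      d ∈ L := by
    intro L hL d hd hfin
    have key := hBnoalg L.length (fun i => L.get i) d
      (fun i => hL (L.get i) (List.get_mem L i)) hd ?_
    · obtain ⟨i, hdi⟩ := key
      rw [hdi]
      exact List.get_mem L i
    · apply Set.Finite.subset hfin
      rintro d' ⟨g, hg, hfix, rfl⟩
      refine ⟨g, hg, ?_, rfl⟩
      intro f hf
      obtain ⟨i, rfl⟩ := List.mem_iff_get.mp hf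
      exact hfix i
  -- STEP 1: there is a point x such that c belongs to every list pinning x
  have key1 : ∃ x : Ω, ∀ L, Pins GS U r L x → c ∈ L := by
    by_contra hno
    push_neg at hno
    choose Lf hLf using hno
    have hLf1 : ∀ x, Pins GS U r (Lf x) x := fun x => (hLf x).1
    have hLf2 : ∀ x, c ∉ Lf x := fun x => (hLf x).2
    set F : List (Set (Fin n → Ω)) := (List.finRange n).flatMap (fun i => Lf (u i)) with hF
    have hFB : ∀ f ∈ F, f ∈ classes U r := by
      intro f hf
      rw [hF, List.mem_flatMap] at hf
      obtain ⟨i, _, hfm⟩ := hf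
      exact (hLf1 (u i)).1 f hfm
    have hforb : {d' | ∃ g ∈ GS, (∀ f ∈ F, sAct g f = f) ∧ d' = sAct g c}.Finite := by
      apply Set.Finite.subset (Set.finite_singleton c)
      rintro d' ⟨g, hg, hfix, rfl⟩
      have hgu : tAct g u = u := by
        funext i
        refine (hLf1 (u i)).2 g hg ?_
        intro f hf
        refine hfix f ?_
        rw [hF, List.mem_flatMap]
        exact ⟨i, List.mem_finRange i, hf⟩
      have : sAct g c = c := sact_fix g hg c hcB u huc hgu
      simp [this]
    have hcF := noAlgOn' F hFB c hcB hforb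
    rw [hF, List.mem_flatMap] at hcF
    obtain ⟨i, _, hcf⟩ := hcF
    exact hLf2 (u i) hcf
  obtain ⟨x, hx⟩ := key1
  -- the list L₀ pinning x
  obtain ⟨L₀, hL₀⟩ := dens' x
  -- the orbit of c under the stabiliser of the point x is finite
  set Obar : Set (Set (Fin n → Ω)) :=
    {d | ∃ h ∈ GS, (h : Equiv.Perm Ω) x = x ∧ d = sAct h c} with hObar
  have hObarFin : Obar.Finite := by
    apply Set.Finite.subset L₀.finite_toSet
    rintro d ⟨h, hhG, hhx, rfl⟩
    have hh' : h ∈ G := hhG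
    have hinvx : (h⁻¹ : Equiv.Perm Ω) x = x := by
      conv_lhs => rw [← hhx]
      exact Equiv.symm_apply_apply h x
    have hL' : Pins GS U r (L₀.map (sAct h⁻¹)) x := by
      constructor
      · intro f' hf'
        obtain ⟨f, hfL, rfl⟩ := List.mem_map.mp hf'
        exact sact_memB h⁻¹ (inv_mem hh' : h⁻¹ ∈ G) f (hL₀.1 f hfL)
      · intro g hg hfix
        have hg' : g ∈ G := hg
        have hkey : ∀ f ∈ L₀, sAct (h * g * h⁻¹) f = f := by
          intro f hfL
          have h1 : sAct g (sAct h⁻¹ f) = sAct h⁻¹ f :=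
            hfix (sAct h⁻¹ f) (List.mem_map.mpr ⟨f, hfL, rfl⟩)
          have h2 : sAct h (sAct g (sAct h⁻¹ f)) = sAct h (sAct h⁻¹ f) := by rw [h1]
          rw [sact_comp h g, sact_comp (h * g) h⁻¹, sact_cancel] at h2
          exact h2
        have hmem : h * g * h⁻¹ ∈ G := mul_mem (mul_mem hh' hg') (inv_mem hh')
        have hfx := hL₀.2 (h * g * h⁻¹) hmem hkey
        have hfx' : h (g ((h⁻¹ : Equiv.Perm Ω) x)) = x := by
          simpa [Equiv.Perm.mul_apply] using hfx
        rw [hinvx] at hfx'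
        have : h (g x) = h x := by rw [hfx', hhx]
        exact h.injective this
    have hcL' := hx _ hL'
    obtain ⟨f, hfL, hef⟩ := List.mem_map.mp hcL'
    have : sAct h c = f := by rw [← hef, sact_cancel]
    simpa [this] using hfL
  -- KEY LEMMA: any class entangled by x equals c
  have keyA : ∀ d, d ∈ classes U r → Entangles x d → c = d := by
    intro d hd hent
    obtain ⟨w0, hw0U, hdeq⟩ := id hd
    have hw0d : w0 ∈ d := by rw [hdeq]; exact mem_cls_self w0 hw0U
    set R : Set Ω := {x' | ∃ γ ∈ GS, sAct γ d = d ∧ x' = γ x} with hR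
    have hRfin : R.Finite := by
      apply Set.Finite.subset (Set.finite_range w0)
      rintro x' ⟨γ, hγG, hγfix, rfl⟩
      have hw0' : w0 ∈ sAct γ d := by rw [hγfix]; exact hw0d
      obtain ⟨w'', hw''d, hw_eq⟩ := hw0'
      obtain ⟨i, hi⟩ := hent w'' hw''d
      refine ⟨i, ?_⟩
      rw [← hw_eq]
      show tAct γ w'' i = γ x
      simp [tAct, hi]
    haveI : Finite R := hRfin.to_subtype
    have hsel : ∀ x' ∈ R, ∃ γ, γ ∈ GS ∧ sAct γ d = d ∧ x' = γ x := by
      rintro x' ⟨γ, h1, h2, h3⟩; exact ⟨γ, h1, h2, h3⟩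
    choose γsel hsel1 hsel2 hsel3 using hsel
    have horb : {d' | ∃ g ∈ GS, sAct g d = d ∧ d' = sAct g c}.Finite := by
      have hcov : {d' | ∃ g ∈ GS, sAct g d = d ∧ d' = sAct g c} ⊆
          ⋃ (p : {x' // x' ∈ R}), (sAct (γsel p.1 p.2)) '' Obar := by
        rintro d' ⟨γ, hγG, hγfix, rfl⟩
        have hγ' : γ ∈ G := hγG
        have hx'R : γ x ∈ R := ⟨γ, hγG, hγfix, rfl⟩
        refine Set.mem_iUnion.mpr ⟨⟨γ x, hx'R⟩, ?_⟩
        set γ0 : Equiv.Perm Ω := γsel (γ x) hx'R with hγ0def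
        have hγ0G : γ0 ∈ G := hsel1 (γ x) hx'R
        have h3 : γ x = γ0 x := hsel3 (γ x) hx'R
        refine ⟨sAct (γ0⁻¹ * γ) c, ?_, ?_⟩
        · refine ⟨γ0⁻¹ * γ,
            (mul_mem (inv_mem hγ0G) hγ' : γ0⁻¹ * γ ∈ G), ?_, rfl⟩
          show (γ0⁻¹ * γ : Equiv.Perm Ω) x = x
          rw [Equiv.Perm.mul_apply, h3]
          exact Equiv.symm_apply_apply γ0 x
        · rw [sact_comp, mul_inv_cancel_left]
      exact Set.Finite.subset
        (Set.finite_iUnion (fun p : {x' // x' ∈ R} => hObarFin.image (sAct (γsel p.1 p.2)))) hcov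
    have key := hBnoalg 1 (fun _ => d) c (fun _ => hd) hcB ?_
    · obtain ⟨_, hcd⟩ := key
      exact hcd
    · apply Set.Finite.subset horb
      rintro d' ⟨g, hg, hfix, rfl⟩
      exact ⟨g, hg, hfix 0, rfl⟩
  -- STEP 2: some member of L₀ is entangled by x
  have hent_ex : ∃ f ∈ L₀, Entangles x f := by
    by_contra hno
    push_neg at hno
    have hw : ∀ i : Fin L₀.length, ∃ v, v ∈ L₀.get i ∧ ∀ j : Fin n, v j ≠ x := by
      intro i
      have hne := hno (L₀.get i) (List.get_mem L₀ i)
      simp only [Entangles, not_forall] at hne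
      obtain ⟨v, hv, hvx⟩ := hne
      refine ⟨v, hv, ?_⟩
      intro j hj
      exact hvx ⟨j, hj⟩
    choose w hw1 hw2 using hw
    set y : Fin (L₀.length * n) → Ω :=
      fun p => w (finProdFinEquiv.symm p).1 (finProdFinEquiv.symm p).2 with hy
    have horbx : {b | ∃ g ∈ GS, (∀ p, g (y p) = y p) ∧ b = g x}.Finite := by
      apply Set.Finite.subset (Set.finite_singleton x)
      rintro b ⟨g, hg, hfix, rfl⟩
      have hfixw : ∀ i : Fin L₀.length, tAct g (w i) = w i := by
        intro i; funext j
        show g (w i j) = w i j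
        have h1 := hfix (finProdFinEquiv (i, j))
        simp only [hy] at h1
        rwa [Equiv.symm_apply_apply] at h1
      have hfixL : ∀ f ∈ L₀, sAct g f = f := by
        intro f hf
        obtain ⟨i, rfl⟩ := List.mem_iff_get.mp hf
        exact sact_fix g hg _ (hL₀.1 _ hf) (w i) (hw1 i) (hfixw i)
      have := hL₀.2 g hg hfixL
      simp [this]
    obtain ⟨p, hp⟩ := hGnoalg (L₀.length * n) y x horbx
    simp only [hy] at hp
    exact hw2 (finProdFinEquiv.symm p).1 (finProdFinEquiv.symm p).2 hp.symm
  obtain ⟨fstar, hfstarL, hentf⟩ := hent_ex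
  have hcf : c = fstar := keyA fstar (hL₀.1 fstar hfstarL) hentf
  have hentc : Entangles x c := by rw [hcf]; exact hentf
  exact ⟨x, hentc, fun c' hc' he => (keyA c' hc' he).symm⟩
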